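/- Let $V$ be a vector space over a field $k$. Equip $V^*$ with the finite topology (a net $\lambda_j \to \lambda$ iff for each $v \in V$, $\lambda_j(v) = \lambda(v)$ eventually). Then for every subspace $W \subseteq V$, the annihilator $W^\perp \subseteq V^*$ is closed, and the map $W \mapsto W^\perp$ is an inclusion-reversing bijection between the subspaces of $V$ and the closed subspaces of $V^*$. -/

import Mathlib

/-- The finite (`Π`-) topology on the dual space `V^*`: the topology of pointwise
convergence, where the field `k` carries the discrete topology. -/
noncomputable def dualFiniteTopology (k V : Type*) [Field k] [AddCommGroup V]
    [Module k V] : TopologicalSpace (Module.Dual k V) :=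
  TopologicalSpace.induced (fun f (v : V) => f v)
    (@Pi.topologicalSpace V (fun _ => k) (fun _ => ⊥))

section aux

variable {k V : Type*} [Field k] [AddCommGroup V] [Module k V]

/-- Approximation on finite sets: if `f` annihilates the coannihilator of `C`, then on any
finite set of vectors, `f` agrees with some element of `C`. -/
theorem exists_agree_on_finset (C : Submodule k (Module.Dual k V))
    (f : Module.Dual k V) (hf : f ∈ C.dualCoannihilator.dualAnnihilator)
    (I : Finset V) : ∃ g ∈ C, ∀ v ∈ I, g v = f v := by
  classical
  set U : Submodule k V := Submodule.span k (I : Set V) with hU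
  haveI : FiniteDimensional k U := FiniteDimensional.span_finset k I
  set r : Module.Dual k V →ₗ[k] Module.Dual k U := U.subtype.dualMap with hr
  set D : Submodule k (Module.Dual k U) := C.map r with hD
  have hfD : r f ∈ D := by
    by_contra hnot
    obtain ⟨φ, hφne, hφbot⟩ := D.exists_dual_map_eq_bot_of_notMem hnot inferInstance
    set u : U := (Module.evalEquiv k U).symm φ with hu
    have hu_ann : (u : V) ∈ C.dualCoannihilator := by
      rw [Submodule.mem_dualCoannihilator]
      intro g hg
      have hgD : r g ∈ D := Submodule.mem_map_of_mem hg
      have : φ (r g) = 0 := by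
        have : φ (r g) ∈ D.map φ := Submodule.mem_map_of_mem hgD
        rwa [hφbot, Submodule.mem_bot] at this
      calc g (u : V) = (r g) u := rfl
        _ = φ (r g) := Module.apply_evalEquiv_symm_apply k U (r g) φ
        _ = 0 := this
    have hfu : f (u : V) = 0 := (Submodule.mem_dualAnnihilator f).mp hf _ hu_ann
    have : φ (r f) = f (u : V) := (Module.apply_evalEquiv_symm_apply k U (r f) φ).symm
    rw [hfu] at this
    exact hφne this
  obtain ⟨g, hgC, hgr⟩ := hfD
  refine ⟨g, hgC, fun v hv => ?_⟩
  have hvU : v ∈ U := Submodule.subset_span hv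
  have := congrFun (congrArg (fun (h : Module.Dual k U) => (h : U → k)) hgr) ⟨v, hvU⟩
  simpa [hr] using this

end aux

/-- In the finite topology on `V^*`, every annihilator `W^⊥` is closed,
and `W ↦ W^⊥` is an inclusion-reversing bijection between subspaces of `V` and closed
subspaces of `V^*`. -/
theorem stmt_14 {k V : Type*} [Field k] [AddCommGroup V] [Module k V] :
    (∀ W : Submodule k V,
      @IsClosed _ (dualFiniteTopology k V) (W.dualAnnihilator : Set (Module.Dual k V))) ∧
    Function.Injective (fun W : Submodule k V => W.dualAnnihilator) ∧
    (∀ Csub : Submodule k (Module.Dual k V),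
      @IsClosed _ (dualFiniteTopology k V) (Csub : Set (Module.Dual k V)) →
      ∃ W : Submodule k V, W.dualAnnihilator = Csub) ∧
    (∀ W₁ W₂ : Submodule k V, W₁ ≤ W₂ ↔ W₂.dualAnnihilator ≤ W₁.dualAnnihilator) := by
  classical
  letI tk : TopologicalSpace k := ⊥
  haveI : DiscreteTopology k := ⟨rfl⟩
  letI tD : TopologicalSpace (Module.Dual k V) := dualFiniteTopology k V
  have hcont : Continuous (fun (f : Module.Dual k V) (v : V) => f v) :=
    continuous_induced_dom
  have heval : ∀ w : V, Continuous (fun f : Module.Dual k V => f w) := fun w =>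
    (continuous_apply w).comp hcont
  refine ⟨?_, ?_, ?_, ?_⟩
  · intro W
    have : (W.dualAnnihilator : Set (Module.Dual k V)) =
        ⋂ w : W, (fun f : Module.Dual k V => f (w : V)) ⁻¹' {0} := by
      ext f
      simp [Submodule.mem_dualAnnihilator, Set.mem_iInter]
    rw [this]
    exact isClosed_iInter fun w => (isClosed_singleton).preimage (heval (w : V))
  · intro W₁ W₂ h
    exact Subspace.dualAnnihilator_inj.mp h
  · intro C hC
    refine ⟨C.dualCoannihilator, le_antisymm ?_ ?_⟩
    · -- every f in the double annihilator lies in the closure of C, which is C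
      intro f hf
      have hmem : f ∈ closure (C : Set (Module.Dual k V)) := by
        rw [mem_closure_iff]
        intro O hO hfO
        change @IsOpen _ (TopologicalSpace.induced (fun f (v : V) => f v)
          (@Pi.topologicalSpace V (fun _ => k) (fun _ => ⊥))) O at hO
        rw [isOpen_induced_iff] at hO
        obtain ⟨Upi, hUpi, rfl⟩ := hO
        rw [isOpen_pi_iff] at hUpi
        obtain ⟨I, u, hu, hsub⟩ := hUpi _ hfO
        obtain ⟨g, hgC, hg⟩ := exists_agree_on_finset C f hf I
        refine ⟨g, ?_, hgC⟩
        apply hsub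
        intro v hv
        show g v ∈ u v
        rw [hg v (Finset.mem_coe.mp hv)]
        exact (hu v (Finset.mem_coe.mp hv)).2
      rwa [hC.closure_eq] at hmem
    · intro g hg
      rw [Submodule.mem_dualAnnihilator]
      intro v hv
      exact (Submodule.mem_dualCoannihilator v).mp hv g hg
  · intro W₁ W₂
    exact ⟨fun h => Subspace.dualAnnihilator_le_dualAnnihilator_iff.mpr h,
      fun h => Subspace.dualAnnihilator_le_dualAnnihilator_iff.mp h⟩
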